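/- F is a face of the positive semidefinite cone S^k₊ if and only if there exist an orthogonal matrix U ∈ ℝ^{k×k} and an integer s with 0 ≤ s ≤ k such that F = {U·[[A,0],[0,0]]·Uᵀ : A ∈ Sˢ₊}, where [[A,0],[0,0]] denotes the k×k block matrix with upper-left s×s block A and zeros elsewhere. -/

import Mathlib

open scoped Matrix
/-- `F` is a face of the convex cone `C`. -/
def IsFace {E : Type*} [AddCommGroup E] [Module ℝ E] (C F : Set E) : Prop :=
  F.Nonempty ∧ F ⊆ C ∧ Convex ℝ F ∧
    ∀ y ∈ F, ∀ z ∈ C, ∀ w ∈ C, ∀ α : ℝ, 0 < α → α < 1 →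
      y = α • z + (1 - α) • w → z ∈ F ∧ w ∈ F

/-- The `k×k` matrix `[[A, 0], [0, 0]]` with upper-left `s×s` block `A`. -/
def embedBlock (k s : ℕ) (A : Matrix (Fin s) (Fin s) ℝ) : Matrix (Fin k) (Fin k) ℝ :=
  Matrix.of fun i j =>
    if hi : (i : ℕ) < s then if hj : (j : ℕ) < s then A ⟨i, hi⟩ ⟨j, hj⟩ else 0 else 0

namespace Stmt14Aux

open Matrix

variable {k s : ℕ}

lemma embed_apply (A : Matrix (Fin s) (Fin s) ℝ) (i j : Fin k) :
    embedBlock k s A i j =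
      if hi : (i : ℕ) < s then if hj : (j : ℕ) < s then A ⟨i, hi⟩ ⟨j, hj⟩ else 0 else 0 := rfl

/-- the `k × s` inclusion matrix -/
def Jmat (k s : ℕ) : Matrix (Fin k) (Fin s) ℝ :=
  Matrix.of fun i j => if (i : ℕ) = (j : ℕ) then 1 else 0

lemma Jmat_apply (i : Fin k) (j : Fin s) :
    Jmat k s i j = if (i : ℕ) = (j : ℕ) then 1 else 0 := rfl

lemma Jt_mul_apply (h : s ≤ k) {m : Type*} [Fintype m] (M : Matrix (Fin k) m ℝ)
    (a : Fin s) (j : m) : ((Jmat k s)ᵀ * M) a j = M (Fin.castLE h a) j := by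
  simp only [Matrix.mul_apply, transpose_apply, Jmat_apply]
  rw [Finset.sum_eq_single (Fin.castLE h a)]
  · simp
  · intro b _ hb
    rw [if_neg, zero_mul]
    intro hba
    exact hb (Fin.ext hba)
  · intro hmem; exact absurd (Finset.mem_univ _) hmem

lemma J_mul_apply {m : Type*} [Fintype m] (M : Matrix (Fin s) m ℝ) (i : Fin k) (j : m) :
    (Jmat k s * M) i j = if hi : (i : ℕ) < s then M ⟨i, hi⟩ j else 0 := by
  simp only [Matrix.mul_apply, Jmat_apply]
  by_cases hi : (i : ℕ) < s
  · rw [dif_pos hi, Finset.sum_eq_single (⟨(i : ℕ), hi⟩ : Fin s)]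
    · simp
    · intro b _ hb
      rw [if_neg, zero_mul]
      intro hba
      exact hb (Fin.ext hba.symm)
    · intro hmem; exact absurd (Finset.mem_univ _) hmem
  · rw [dif_neg hi]
    apply Finset.sum_eq_zero
    intro b _
    rw [if_neg, zero_mul]
    intro hba
    exact hi (hba ▸ b.2)

lemma mul_Jt_apply {m : Type*} [Fintype m] (M : Matrix m (Fin s) ℝ) (i : m) (j : Fin k) :
    (M * (Jmat k s)ᵀ) i j = if hj : (j : ℕ) < s then M i ⟨j, hj⟩ else 0 := by
  have : (M * (Jmat k s)ᵀ) i j = ((Jmat k s) * Mᵀ)ᵀ i j := by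
    rw [Matrix.transpose_mul, Matrix.transpose_transpose]
  rw [this, Matrix.transpose_apply, J_mul_apply]
  rfl

lemma embed_eq_J (h : s ≤ k) (A : Matrix (Fin s) (Fin s) ℝ) :
    embedBlock k s A = Jmat k s * A * (Jmat k s)ᵀ := by
  ext i j
  simp only [embed_apply, mul_Jt_apply, J_mul_apply]
  by_cases hi : (i : ℕ) < s
  · by_cases hj : (j : ℕ) < s <;> simp [hi, hj]
  · simp [hi]

lemma embed_posSemidef (h : s ≤ k) {A : Matrix (Fin s) (Fin s) ℝ} (hA : A.PosSemidef) :
    (embedBlock k s A).PosSemidef := by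
  rw [embed_eq_J h]
  have := hA.mul_mul_conjTranspose_same (Jmat k s)
  rwa [conjTranspose_eq_transpose_of_trivial] at this

lemma embed_extract (h : s ≤ k) {M : Matrix (Fin k) (Fin k) ℝ} (hsym : M.IsHermitian)
    (hc : ∀ (i j : Fin k), s ≤ (j : ℕ) → M i j = 0) :
    M = embedBlock k s (M.submatrix (Fin.castLE h) (Fin.castLE h)) := by
  ext i j
  rw [embed_apply]
  by_cases hi : (i : ℕ) < s
  · by_cases hj : (j : ℕ) < s
    · simp only [dif_pos hi, dif_pos hj, Matrix.submatrix_apply]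
      congr 1
    · rw [dif_pos hi, dif_neg hj]
      exact hc i j (le_of_not_gt hj)
  · rw [dif_neg hi]
    have h1 : M j i = 0 := hc j i (le_of_not_gt hi)
    have h2 : M i j = star (M j i) := by
      conv_lhs => rw [← hsym]
      rfl
    rw [h2, h1, star_zero]

lemma embed_mulVec_single {A : Matrix (Fin s) (Fin s) ℝ} {j : Fin k} (hj : s ≤ (j : ℕ)) :
    embedBlock k s A *ᵥ Pi.single j 1 = 0 := by
  ext i
  rw [Matrix.mulVec_single_one]
  simp only [mul_one, Matrix.col_apply, embed_apply, Pi.zero_apply]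
  by_cases hi : (i : ℕ) < s
  · rw [dif_pos hi, dif_neg (not_lt.mpr hj)]
  · rw [dif_neg hi]

lemma embed_combo (h : s ≤ k) (a b : ℝ) (A B : Matrix (Fin s) (Fin s) ℝ) :
    embedBlock k s (a • A + b • B) = a • embedBlock k s A + b • embedBlock k s B := by
  simp only [embed_eq_J h, Matrix.mul_add, Matrix.add_mul, Matrix.mul_smul, Matrix.smul_mul]

lemma psd_smul {n : Type*} [Fintype n] {M : Matrix n n ℝ} (hM : M.PosSemidef) {c : ℝ}
    (hc : 0 ≤ c) : (c • M).PosSemidef := by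
  refine Matrix.PosSemidef.of_dotProduct_mulVec_nonneg ?_ ?_
  · unfold Matrix.IsHermitian
    rw [Matrix.conjTranspose_smul, hM.1]
    congr 1
  · intro x
    rw [Matrix.smul_mulVec, dotProduct_smul]
    exact smul_nonneg hc (hM.dotProduct_mulVec_nonneg x)

lemma conj_psd {U M : Matrix (Fin k) (Fin k) ℝ} (hM : M.PosSemidef) :
    (U * M * Uᵀ).PosSemidef := by
  have := hM.mul_mul_conjTranspose_same U
  rwa [conjTranspose_eq_transpose_of_trivial] at this

lemma conjT_psd {U M : Matrix (Fin k) (Fin k) ℝ} (hM : M.PosSemidef) :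
    (Uᵀ * M * U).PosSemidef := by
  have := hM.conjTranspose_mul_mul_same U
  rwa [conjTranspose_eq_transpose_of_trivial] at this

lemma quad_le_trace {A : Matrix (Fin s) (Fin s) ℝ} (hA : A.PosSemidef) (x : Fin s → ℝ) :
    x ⬝ᵥ A *ᵥ x ≤ A.trace * (∑ i, x i ^ 2) := by
  obtain ⟨B, rfl⟩ : ∃ B : Matrix (Fin s) (Fin s) ℝ, A = Bᴴ * B := by
    open scoped MatrixOrder in
    obtain ⟨B, hB⟩ := CStarAlgebra.nonneg_iff_eq_star_mul_self.mp hA.nonneg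
    exact ⟨B, by rw [hB, Matrix.star_eq_conjTranspose]⟩
  rw [Matrix.conjTranspose_eq_transpose_of_trivial] at *
  have h1 : x ⬝ᵥ (Bᵀ * B) *ᵥ x = ∑ i, (B *ᵥ x) i ^ 2 := by
    rw [← Matrix.mulVec_mulVec, Matrix.dotProduct_mulVec, Matrix.vecMul_transpose]
    simp [dotProduct, pow_two]
  have h2 : (Bᵀ * B).trace = ∑ i, ∑ j, B i j ^ 2 := by
    rw [Matrix.trace]
    simp only [Matrix.diag_apply, Matrix.mul_apply, Matrix.transpose_apply]
    rw [Finset.sum_comm]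
    simp [pow_two]
  rw [h1, h2, Finset.sum_mul]
  apply Finset.sum_le_sum
  intro i _
  have := Finset.sum_mul_sq_le_sq_mul_sq Finset.univ (fun j => B i j) x
  calc (B *ᵥ x) i ^ 2 = (∑ j, B i j * x j) ^ 2 := by rfl
    _ ≤ (∑ j, B i j ^ 2) * ∑ j, x j ^ 2 := this

lemma exists_eps (d : Fin s → ℝ) (hd : ∀ i, 0 < d i) {A : Matrix (Fin s) (Fin s) ℝ}
    (hA : A.PosSemidef) : ∃ ε : ℝ, 0 < ε ∧ (Matrix.diagonal d - ε • A).PosSemidef := by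
  rcases isEmpty_or_nonempty (Fin s) with hse | hse
  · refine ⟨1, one_pos, ?_⟩
    have : Matrix.diagonal d - (1 : ℝ) • A = 0 := by
      ext i j; exact hse.elim i
    rw [this]; exact Matrix.PosSemidef.zero
  · have hne : (Finset.univ : Finset (Fin s)).Nonempty := Finset.univ_nonempty
    set m := Finset.univ.inf' hne d with hm
    have hmpos : 0 < m := (Finset.lt_inf'_iff hne).mpr fun i _ => hd i
    have hmle : ∀ i, m ≤ d i := fun i => Finset.inf'_le d (Finset.mem_univ i)
    have htr : 0 ≤ A.trace := by
      rw [Matrix.trace]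
      apply Finset.sum_nonneg
      intro i _
      exact hA.diag_nonneg
    refine ⟨m / (A.trace + 1), div_pos hmpos (by linarith), ?_⟩
    set ε := m / (A.trace + 1) with hε
    have hεpos : 0 < ε := div_pos hmpos (by linarith)
    refine Matrix.PosSemidef.of_dotProduct_mulVec_nonneg ?_ ?_
    · unfold Matrix.IsHermitian
      rw [Matrix.conjTranspose_sub, Matrix.conjTranspose_smul, hA.1,
        Matrix.conjTranspose_eq_transpose_of_trivial, Matrix.diagonal_transpose]
      congr 1
    · intro x
      rw [star_trivial, Matrix.sub_mulVec, dotProduct_sub, Matrix.smul_mulVec,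
        dotProduct_smul, sub_nonneg]
      have hDx : x ⬝ᵥ Matrix.diagonal d *ᵥ x = ∑ i, d i * x i ^ 2 := by
        simp [Matrix.mulVec_diagonal, dotProduct, pow_two]; ring_nf
        apply Finset.sum_congr rfl; intro i _; ring
      have h1 : x ⬝ᵥ A *ᵥ x ≤ A.trace * ∑ i, x i ^ 2 := quad_le_trace hA x
      have h2 : m * ∑ i, x i ^ 2 ≤ x ⬝ᵥ Matrix.diagonal d *ᵥ x := by
        rw [hDx, Finset.mul_sum]
        apply Finset.sum_le_sum
        intro i _
        exact mul_le_mul_of_nonneg_right (hmle i) (sq_nonneg _)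
      have h3 : ε * (x ⬝ᵥ A *ᵥ x) ≤ ε * (A.trace * ∑ i, x i ^ 2) :=
        mul_le_mul_of_nonneg_left h1 hεpos.le
      have h4 : ε * (A.trace * ∑ i, x i ^ 2) ≤ m * ∑ i, x i ^ 2 := by
        rw [← mul_assoc]
        apply mul_le_mul_of_nonneg_right _ (Finset.sum_nonneg fun i _ => sq_nonneg _)
        rw [hε, div_mul_eq_mul_div, div_le_iff₀ (by linarith)]
        nlinarith
      calc ε • (x ⬝ᵥ A *ᵥ x) = ε * (x ⬝ᵥ A *ᵥ x) := rfl
        _ ≤ m * ∑ i, x i ^ 2 := le_trans h3 h4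
        _ ≤ x ⬝ᵥ Matrix.diagonal d *ᵥ x := h2

lemma sorted_spectral {Y : Matrix (Fin k) (Fin k) ℝ} (hY : Y.PosSemidef) :
    ∃ (U : Matrix (Fin k) (Fin k) ℝ) (s : ℕ) (hs : s ≤ k) (d : Fin s → ℝ),
      Uᵀ * U = 1 ∧ (∀ a, 0 < d a) ∧ Y = U * embedBlock k s (Matrix.diagonal d) * Uᵀ := by
  have hH : Y.IsHermitian := hY.1
  set f := hH.eigenvalues with hfdef
  have hf : ∀ i, 0 ≤ f i := hY.eigenvalues_nonneg
  set V := (hH.eigenvectorUnitary : Matrix (Fin k) (Fin k) ℝ) with hVdef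
  have hV : Vᵀ * V = 1 := by
    have := (Unitary.mem_iff.mp hH.eigenvectorUnitary.2).1
    rwa [Matrix.star_eq_conjTranspose, Matrix.conjTranspose_eq_transpose_of_trivial] at this
  have hspec : Y = V * Matrix.diagonal f * Vᵀ := by
    have := hH.spectral_theorem
    rwa [Unitary.conjStarAlgAut_apply, Matrix.star_eq_conjTranspose, Matrix.conjTranspose_eq_transpose_of_trivial,
      RCLike.ofReal_real_eq_id, Function.id_comp] at this
  set σ := Tuple.sort (fun i => -f i) with hσdef
  have hmono := Tuple.monotone_sort (fun i => -f i)
  set lam := f ∘ σ with hlamdef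
  have hanti : Antitone lam := by
    intro i j hij
    have := hmono hij
    simpa [hlamdef] using this
  have hlnn : ∀ i, 0 ≤ lam i := fun i => hf (σ i)
  set s := (Finset.univ.filter fun i : Fin k => 0 < lam i).card with hsdef
  have hs : s ≤ k := by
    rw [hsdef]
    exact (Finset.card_filter_le _ _).trans (by simp)
  have key : ∀ i : Fin k, 0 < lam i ↔ (i : ℕ) < s := by
    intro i
    constructor
    · intro hpos
      have hsub : Finset.Iic i ⊆ Finset.univ.filter fun j : Fin k => 0 < lam j := by
        intro j hj
        rw [Finset.mem_Iic] at hj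
        exact Finset.mem_filter.mpr ⟨Finset.mem_univ _, lt_of_lt_of_le hpos (hanti hj)⟩
      have := Finset.card_le_card hsub
      rw [Fin.card_Iic] at this
      omega
    · intro hi
      by_contra hneg
      have hzero : lam i = 0 := le_antisymm (not_lt.mp hneg) (hlnn i)
      have hsub : (Finset.univ.filter fun j : Fin k => 0 < lam j) ⊆ Finset.Iio i := by
        intro j hj
        rw [Finset.mem_filter] at hj
        rw [Finset.mem_Iio]
        by_contra hji
        have : lam j ≤ lam i := hanti (not_lt.mp hji)
        rw [hzero] at this
        exact absurd (lt_of_lt_of_le hj.2 this) (lt_irrefl 0)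
      have := Finset.card_le_card hsub
      rw [Fin.card_Iio] at this
      omega
  set U := V.submatrix id σ with hUdef
  have hU : Uᵀ * U = 1 := by
    rw [hUdef, Matrix.transpose_submatrix,
      ← Matrix.submatrix_mul Vᵀ V σ id σ Function.bijective_id, hV,
      Matrix.submatrix_one_equiv]
  refine ⟨U, s, hs, fun a => lam (Fin.castLE hs a), hU, ?_, ?_⟩
  · intro a
    exact (key _).mpr (by simpa using a.2)
  · have hdiag : Matrix.diagonal lam = embedBlock k s
        (Matrix.diagonal fun a => lam (Fin.castLE hs a)) := by
      ext i j
      rw [embed_apply]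
      by_cases hi : (i : ℕ) < s
      · by_cases hj : (j : ℕ) < s
        · rw [dif_pos hi, dif_pos hj]
          have hcast : Fin.castLE hs ⟨(i : ℕ), hi⟩ = i := rfl
          simp only [Matrix.diagonal_apply, hcast, Fin.mk.injEq, ← Fin.ext_iff]
        · rw [dif_pos hi, dif_neg hj, Matrix.diagonal_apply,
            if_neg (fun h => hj (by rw [← h]; exact hi))]
      · rw [dif_neg hi, Matrix.diagonal_apply]
        by_cases hij : i = j
        · rw [if_pos hij]
          have : ¬ 0 < lam i := fun h => hi ((key i).mp h)
          exact le_antisymm (not_lt.mp this) (hlnn i)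
        · rw [if_neg hij]
    have hdl : Matrix.diagonal lam = (Matrix.diagonal f).submatrix σ σ := by
      rw [Matrix.submatrix_diagonal _ _ σ.injective]
    rw [← hdiag, hdl, hUdef, Matrix.transpose_submatrix,
      ← Matrix.submatrix_mul _ _ id σ σ σ.bijective,
      ← Matrix.submatrix_mul _ _ id σ id σ.bijective,
      Matrix.submatrix_id_id]
    exact hspec

lemma mem_form (h : s ≤ k) {U Z : Matrix (Fin k) (Fin k) ℝ} (hU : Uᵀ * U = 1)
    (hZ : Z.PosSemidef)
    (hcol : ∀ j : Fin k, s ≤ (j : ℕ) → Z *ᵥ (U *ᵥ Pi.single j 1) = 0) :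
    ∃ A : Matrix (Fin s) (Fin s) ℝ, A.PosSemidef ∧ Z = U * embedBlock k s A * Uᵀ := by
  have hUUt : U * Uᵀ = 1 := mul_eq_one_comm.mp hU
  set M := Uᵀ * Z * U with hM
  have hMpsd : M.PosSemidef := conjT_psd hZ
  have hcol' : ∀ (i j : Fin k), s ≤ (j : ℕ) → M i j = 0 := by
    intro i j hj
    have h0 : M *ᵥ Pi.single j 1 = 0 := by
      rw [hM, ← Matrix.mulVec_mulVec, ← Matrix.mulVec_mulVec, hcol j hj, Matrix.mulVec_zero]
    have := congrFun h0 i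
    simpa using this
  refine ⟨M.submatrix (Fin.castLE h) (Fin.castLE h), hMpsd.submatrix _, ?_⟩
  rw [← embed_extract h hMpsd.1 hcol', hM]
  simp only [← Matrix.mul_assoc]
  rw [hUUt, Matrix.one_mul, Matrix.mul_assoc, hUUt, Matrix.mul_one]

end Stmt14Aux

open Matrix Stmt14Aux in
/-- The faces of the positive semidefinite cone `Sᵏ₊` are exactly the sets
`{U·[[A,0],[0,0]]·Uᵀ : A ∈ Sˢ₊}` for `U` orthogonal and `0 ≤ s ≤ k`. -/
theorem stmt14 (k : ℕ) (F : Set (Matrix (Fin k) (Fin k) ℝ)) :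
    IsFace {A : Matrix (Fin k) (Fin k) ℝ | A.PosSemidef} F ↔
      ∃ (U : Matrix (Fin k) (Fin k) ℝ) (s : ℕ), s ≤ k ∧ Uᵀ * U = 1 ∧
        F = {M | ∃ A : Matrix (Fin s) (Fin s) ℝ, A.PosSemidef ∧
          M = U * embedBlock k s A * Uᵀ} := by
  constructor
  · rintro ⟨⟨Y₀, hY₀F⟩, hsub, hconv, hface⟩
    -- faces of the cone are closed under positive scaling
    have cone : ∀ y ∈ F, ∀ c : ℝ, 0 < c → c • y ∈ F := by
      intro y hyF c hc
      set α : ℝ := 1 / (c + 1) with hα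
      have hα0 : 0 < α := by positivity
      have hα1 : α < 1 := by
        rw [hα, div_lt_one (by linarith)]; linarith
      have hαc : α * c < 1 := by
        rw [hα, div_mul_eq_mul_div, div_lt_one (by linarith)]; linarith
      have hyP : y.PosSemidef := hsub hyF
      have hkey : y = α • (c • y) + (1 - α) • (((1 - α * c) / (1 - α)) • y) := by
        rw [smul_smul, smul_smul]
        have h1 : (1 : ℝ) - α ≠ 0 := by linarith
        have : α * c + (1 - α) * ((1 - α * c) / (1 - α)) = 1 := by field_simp; ring
        rw [← add_smul, this, one_smul]
      have hz : (c • y).PosSemidef := psd_smul hyP hc.le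
      have hw : (((1 - α * c) / (1 - α)) • y).PosSemidef :=
        psd_smul hyP (div_nonneg (by linarith) (by linarith))
      exact (hface y hyF _ hz _ hw α hα0 hα1 hkey).1
    -- choose an element with minimal kernel dimension
    set nfun : Matrix (Fin k) (Fin k) ℝ → ℕ :=
      fun M => Module.finrank ℝ (LinearMap.ker M.mulVecLin) with hnfun
    obtain ⟨Y, hYF, hYmin⟩ : ∃ Y ∈ F, ∀ Z ∈ F, nfun Y ≤ nfun Z := by
      have hTne : (nfun '' F).Nonempty := ⟨_, ⟨Y₀, hY₀F, rfl⟩⟩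
      obtain ⟨Y, hYF, hY⟩ := Nat.sInf_mem hTne
      exact ⟨Y, hYF, fun Z hZ => hY ▸ Nat.sInf_le ⟨Z, hZ, rfl⟩⟩
    have hY : Y.PosSemidef := hsub hYF
    -- every element of F has kernel containing ker Y
    have hker : ∀ Z ∈ F, ∀ v, Y *ᵥ v = 0 → Z *ᵥ v = 0 := by
      intro Z hZF
      have hZ : Z.PosSemidef := hsub hZF
      set M := (1/2 : ℝ) • Y + (1/2 : ℝ) • Z with hMdef
      have hMF : M ∈ F := by
        rw [hMdef]
        exact hconv hYF hZF (by norm_num) (by norm_num) (by norm_num)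
      have hM : M.PosSemidef := hsub hMF
      have hsplit : ∀ v, M *ᵥ v = 0 → Y *ᵥ v = 0 ∧ Z *ᵥ v = 0 := by
        intro v hv
        have h0 : v ⬝ᵥ M *ᵥ v = 0 := by rw [hv, dotProduct_zero]
        have hy2 : 0 ≤ v ⬝ᵥ Y *ᵥ v := by have := hY.dotProduct_mulVec_nonneg v; rwa [star_trivial] at this
        have hz2 : 0 ≤ v ⬝ᵥ Z *ᵥ v := by have := hZ.dotProduct_mulVec_nonneg v; rwa [star_trivial] at this
        have hexp : v ⬝ᵥ M *ᵥ v = (1/2) * (v ⬝ᵥ Y *ᵥ v) + (1/2) * (v ⬝ᵥ Z *ᵥ v) := by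
          rw [hMdef, Matrix.add_mulVec, Matrix.smul_mulVec, Matrix.smul_mulVec,
            dotProduct_add, dotProduct_smul, dotProduct_smul]
          rfl
        have hyq : v ⬝ᵥ Y *ᵥ v = 0 := by rw [hexp] at h0; linarith
        have hzq : v ⬝ᵥ Z *ᵥ v = 0 := by rw [hexp] at h0; linarith
        exact ⟨(hY.dotProduct_mulVec_zero_iff v).mp (by rwa [star_trivial]),
          (hZ.dotProduct_mulVec_zero_iff v).mp (by rwa [star_trivial])⟩
      have hle : LinearMap.ker M.mulVecLin ≤ LinearMap.ker Y.mulVecLin := by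
        intro v hv
        rw [LinearMap.mem_ker, Matrix.mulVecLin_apply] at *
        exact (hsplit v hv).1
      have heq : LinearMap.ker M.mulVecLin = LinearMap.ker Y.mulVecLin :=
        Submodule.eq_of_le_of_finrank_le hle (hYmin M hMF)
      intro v hv
      have hvY : v ∈ LinearMap.ker Y.mulVecLin := by
        rw [LinearMap.mem_ker, Matrix.mulVecLin_apply]; exact hv
      rw [← heq, LinearMap.mem_ker, Matrix.mulVecLin_apply] at hvY
      exact (hsplit v hvY).2
    obtain ⟨U, s, hs, d, hU, hd, hYdec⟩ := sorted_spectral hY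
    refine ⟨U, s, hs, hU, ?_⟩
    ext Z
    constructor
    · intro hZF
      have hZ : Z.PosSemidef := hsub hZF
      have hcol : ∀ j : Fin k, s ≤ (j : ℕ) → Z *ᵥ (U *ᵥ Pi.single j 1) = 0 := by
        intro j hj
        apply hker Z hZF
        rw [hYdec, Matrix.mulVec_mulVec, Matrix.mul_assoc (U * embedBlock k s _), hU,
          Matrix.mul_one, ← Matrix.mulVec_mulVec, embed_mulVec_single hj, Matrix.mulVec_zero]
      exact mem_form hs hU hZ hcol
    · rintro ⟨A, hA, rfl⟩
      obtain ⟨ε, hε, hDA⟩ := exists_eps d hd hA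
      set Z := U * embedBlock k s A * Uᵀ with hZdef
      have hZpsd : Z.PosSemidef := conj_psd (embed_posSemidef hs hA)
      have hYZ : Y - ε • Z = U * embedBlock k s (Matrix.diagonal d - ε • A) * Uᵀ := by
        have hemb : embedBlock k s (Matrix.diagonal d - ε • A)
            = embedBlock k s (Matrix.diagonal d) - ε • embedBlock k s A := by
          have := embed_combo hs 1 (-ε) (Matrix.diagonal d) A
          simpa [sub_eq_add_neg, neg_smul] using this
        rw [hemb, Matrix.mul_sub, Matrix.sub_mul, hYdec, hZdef, Matrix.mul_smul,
          Matrix.smul_mul]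
      have hpsd1 : ((2 * ε) • Z).PosSemidef := psd_smul hZpsd (by positivity)
      have hpsd2 : ((2 : ℝ) • (Y - ε • Z)).PosSemidef := by
        apply psd_smul _ (by norm_num)
        rw [hYZ]
        exact conj_psd (embed_posSemidef hs hDA)
      have hcomb : Y = (1/2 : ℝ) • ((2 * ε) • Z) + (1 - 1/2 : ℝ) • ((2 : ℝ) • (Y - ε • Z)) := by
        rw [smul_smul, smul_smul]
        module
      obtain ⟨hzF, -⟩ := hface Y hYF _ hpsd1 _ hpsd2 (1/2) (by norm_num) (by norm_num) hcomb
      have := cone _ hzF (1 / (2 * ε)) (by positivity)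
      rwa [smul_smul, one_div, inv_mul_cancel₀ (by positivity), one_smul] at this
  · rintro ⟨U, s, hs, hU, rfl⟩
    have hembed0 : embedBlock k s (0 : Matrix (Fin s) (Fin s) ℝ) = 0 := by
      ext i j
      simp only [embed_apply, Matrix.zero_apply, dite_eq_ite, ite_self]
    refine ⟨⟨0, 0, Matrix.PosSemidef.zero, by rw [hembed0]; simp⟩, ?_, ?_, ?_⟩
    · rintro M ⟨A, hA, rfl⟩
      exact conj_psd (embed_posSemidef hs hA)
    · rintro x ⟨A, hA, rfl⟩ y ⟨B, hB, rfl⟩ a b ha hb hab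
      refine ⟨a • A + b • B, (psd_smul hA ha).add (psd_smul hB hb), ?_⟩
      rw [embed_combo hs, Matrix.mul_add, Matrix.add_mul, Matrix.mul_smul, Matrix.mul_smul,
        Matrix.smul_mul, Matrix.smul_mul]
    · rintro y ⟨A, hA, rfl⟩ z hz w hw α hα0 hα1 hy_eq
      have hzP : z.PosSemidef := hz
      have hwP : w.PosSemidef := hw
      have quad : ∀ j : Fin k, s ≤ (j : ℕ) →
          z *ᵥ (U *ᵥ Pi.single j 1) = 0 ∧ w *ᵥ (U *ᵥ Pi.single j 1) = 0 := by
        intro j hj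
        set v := U *ᵥ Pi.single j 1 with hv
        have h_yv : (U * embedBlock k s A * Uᵀ) *ᵥ v = 0 := by
          rw [hv, Matrix.mulVec_mulVec, Matrix.mul_assoc (U * embedBlock k s A), hU,
            Matrix.mul_one, ← Matrix.mulVec_mulVec, embed_mulVec_single hj,
            Matrix.mulVec_zero]
        have h0 : (0:ℝ) = α * (v ⬝ᵥ z *ᵥ v) + (1 - α) * (v ⬝ᵥ w *ᵥ v) := by
          have h1 : v ⬝ᵥ ((U * embedBlock k s A * Uᵀ) *ᵥ v) = 0 := by
            rw [h_yv, dotProduct_zero]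
          rw [hy_eq, Matrix.add_mulVec, Matrix.smul_mulVec, Matrix.smul_mulVec,
            dotProduct_add, dotProduct_smul, dotProduct_smul] at h1
          exact h1.symm
        have hz2 : 0 ≤ v ⬝ᵥ z *ᵥ v := by have := hzP.dotProduct_mulVec_nonneg v; rwa [star_trivial] at this
        have hw2 : 0 ≤ v ⬝ᵥ w *ᵥ v := by have := hwP.dotProduct_mulVec_nonneg v; rwa [star_trivial] at this
        have h1α : (0:ℝ) ≤ 1 - α := by linarith
        have hαz : α * (v ⬝ᵥ z *ᵥ v) = 0 :=
          le_antisymm (by linarith [mul_nonneg h1α hw2]) (mul_nonneg hα0.le hz2)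
        have hαw : (1 - α) * (v ⬝ᵥ w *ᵥ v) = 0 :=
          le_antisymm (by linarith [mul_nonneg hα0.le hz2]) (mul_nonneg h1α hw2)
        have hzq : v ⬝ᵥ z *ᵥ v = 0 :=
          (mul_eq_zero.mp hαz).resolve_left (ne_of_gt hα0)
        have hwq : v ⬝ᵥ w *ᵥ v = 0 :=
          (mul_eq_zero.mp hαw).resolve_left (by intro h; linarith [sub_eq_zero.mp h])
        exact ⟨(hzP.dotProduct_mulVec_zero_iff v).mp (by rwa [star_trivial]),
          (hwP.dotProduct_mulVec_zero_iff v).mp (by rwa [star_trivial])⟩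
      exact ⟨mem_form hs hU hzP (fun j hj => (quad j hj).1),
        mem_form hs hU hwP (fun j hj => (quad j hj).2)⟩
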